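/- Let n ≥ 2, f > 0, and λ₁ ≥ ... ≥ λₙ satisfy Σᵢ arctan(λᵢ/f) ≥ (n-2)π/2, λₙ < 0. Let u_p, f_p be real numbers (p fixed) and set xᵢ = (f·uᵢᵢₚ - λᵢ f_p)/(f² + λᵢ²) for arbitrary reals u₁₁ₚ,...,uₙₙₚ subject to Σᵢ xᵢ = 0. Then Σᵢ (λᵢ/(f²+λᵢ²)²)·(f·uᵢᵢₚ - λᵢ f_p)² ≥ 0. -/

import Mathlib

open Real Finset

/-- Subadditivity of arctan on nonnegative reals. -/
lemma arctan_add_le {a b : ℝ} (ha : 0 ≤ a) (hb : 0 ≤ b) :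
    Real.arctan (a + b) ≤ Real.arctan a + Real.arctan b := by
  rcases lt_or_ge (a * b) 1 with h | h
  · rw [Real.arctan_add h]
    apply Real.arctan_strictMono.monotone
    rcases eq_or_lt_of_le (add_nonneg ha hb) with h0 | h0
    · simp [← h0]
    · rw [le_div_iff₀ (by nlinarith)]
      nlinarith [mul_nonneg (add_nonneg ha hb) (mul_nonneg ha hb)]
  · have ha' : 0 < a := by nlinarith
    have hb' : 0 < b := by nlinarith
    have h1 : Real.arctan b⁻¹ ≤ Real.arctan a := by
      apply Real.arctan_strictMono.monotone
      rw [inv_le_iff_one_le_mul₀ hb']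
      linarith [mul_comm a b ▸ h]
    rw [Real.arctan_inv_of_pos hb'] at h1
    have := Real.arctan_lt_pi_div_two (a + b)
    linarith

lemma arctan_sum_le {ι : Type*} (s : Finset ι) (a : ι → ℝ) (ha : ∀ i ∈ s, 0 ≤ a i) :
    Real.arctan (∑ i ∈ s, a i) ≤ ∑ i ∈ s, Real.arctan (a i) := by
  induction s using Finset.cons_induction with
  | empty => simp
  | cons i s his ih =>
    rw [Finset.sum_cons, Finset.sum_cons]
    have h1 : 0 ≤ a i := ha i (Finset.mem_cons_self _ _)
    have h2 : ∀ j ∈ s, 0 ≤ a j := fun j hj => ha j (Finset.mem_cons_of_mem hj)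
    calc Real.arctan (a i + ∑ j ∈ s, a j)
        ≤ Real.arctan (a i) + Real.arctan (∑ j ∈ s, a j) :=
          arctan_add_le h1 (Finset.sum_nonneg h2)
      _ ≤ Real.arctan (a i) + ∑ j ∈ s, Real.arctan (a j) := by linarith [ih h2]

theorem stmt_19 (n : ℕ) (hn : 2 ≤ n) (f fp : ℝ) (hf : 0 < f)
    (lam : Fin n → ℝ) (hmono : Antitone lam)
    (hsum : ((n : ℝ) - 2) * Real.pi / 2 ≤ ∑ i, Real.arctan (lam i / f))
    (hneg : lam ⟨n - 1, by omega⟩ < 0)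
    (up : Fin n → ℝ)
    (hx : ∑ i, (f * up i - lam i * fp) / (f ^ 2 + lam i ^ 2) = 0) :
    0 ≤ ∑ i, lam i / (f ^ 2 + lam i ^ 2) ^ 2 * (f * up i - lam i * fp) ^ 2 := by
  have hπ := Real.pi_pos
  set last : Fin n := ⟨n - 1, by omega⟩ with hlast
  have hD : ∀ i, 0 < f ^ 2 + lam i ^ 2 := fun i => by positivity
  set x : Fin n → ℝ := fun i => (f * up i - lam i * fp) / (f ^ 2 + lam i ^ 2) with hxdef
  set θ : Fin n → ℝ := fun i => Real.arctan (lam i / f) with hθ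
  have hx' : ∑ i, x i = 0 := hx
  have hsumθ : ((n : ℝ) - 2) * π / 2 ≤ ∑ i, θ i := hsum
  have hθlt : ∀ i, θ i < π / 2 := fun i => Real.arctan_lt_pi_div_two _
  have hθlast : θ last < 0 := by
    have : Real.arctan (lam last / f) < Real.arctan 0 :=
      Real.arctan_strictMono (div_neg_of_neg_of_pos hneg hf)
    simpa [hθ] using this
  -- positivity of lam i for i ≠ last
  have hlampos : ∀ i, i ≠ last → 0 < lam i := by
    intro i hi
    have hsub : ({i, last} : Finset (Fin n)) ⊆ univ := subset_univ _
    have hcard : ({i, last} : Finset (Fin n)).card = 2 := by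
      rw [Finset.card_insert_of_notMem (by simpa using hi), Finset.card_singleton]
    have hsplit : ∑ j, θ j = (θ i + θ last) + ∑ j ∈ univ \ {i, last}, θ j := by
      rw [← Finset.sum_sdiff hsub, Finset.sum_pair hi]; ring
    have hbound : ∑ j ∈ univ \ {i, last}, θ j ≤ ((n : ℝ) - 2) * (π / 2) := by
      have hc : (univ \ {i, last} : Finset (Fin n)).card = n - 2 := by
        rw [Finset.card_sdiff_of_subset hsub, hcard, Finset.card_univ, Fintype.card_fin]
      calc ∑ j ∈ univ \ {i, last}, θ j
          ≤ (univ \ {i, last}).card • (π / 2) :=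
            Finset.sum_le_card_nsmul _ _ _ (fun j _ => (hθlt j).le)
        _ = ((n : ℝ) - 2) * (π / 2) := by
            rw [hc, nsmul_eq_mul, Nat.cast_sub hn]
            norm_num
    have hθi : 0 < θ i := by
      rw [hsplit] at hsumθ
      have : 0 ≤ θ i + θ last := by linarith
      linarith
    have h2 : (0 : ℝ) < lam i / f := by
      have : Real.arctan 0 < Real.arctan (lam i / f) := by simpa [hθ] using hθi
      exact Real.arctan_strictMono.lt_iff_lt.mp this
    have := mul_pos h2 hf
    rwa [div_mul_cancel₀ _ hf.ne'] at this
  set S : Finset (Fin n) := univ.erase last with hS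
  have hlastmem : last ∈ (univ : Finset (Fin n)) := mem_univ _
  have hSpos : ∀ i ∈ S, 0 < lam i := fun i hi => hlampos i (Finset.ne_of_mem_erase hi)
  have hsplitU : ∀ g : Fin n → ℝ, ∑ i, g i = ∑ i ∈ S, g i + g last :=
    fun g => (Finset.sum_erase_add _ _ hlastmem).symm
  have hcardS : (S.card : ℝ) = (n : ℝ) - 1 := by
    rw [hS, Finset.card_erase_of_mem hlastmem, Finset.card_univ, Fintype.card_fin,
      Nat.cast_sub (by omega)]
    norm_num
  -- Lemma 2.2 : sum of inverses
  have hinv : ∑ i ∈ S, (lam i)⁻¹ ≤ (-lam last)⁻¹ := by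
    have hβ : ∀ i ∈ S, Real.arctan (f / lam i) = π / 2 - θ i := by
      intro i hi
      have h1 : 0 < lam i / f := div_pos (hSpos i hi) hf
      have h2 := Real.arctan_inv_of_pos h1
      rwa [inv_div] at h2
    have hlast2 : Real.arctan (f / (-lam last)) = π / 2 + θ last := by
      have h1 : 0 < -lam last / f := div_pos (neg_pos.mpr hneg) hf
      have h2 := Real.arctan_inv_of_pos h1
      rw [inv_div] at h2
      rw [h2, show -lam last / f = -(lam last / f) by ring, Real.arctan_neg]
      rw [hθ]; ring
    have hsumβ : ∑ i ∈ S, Real.arctan (f / lam i) ≤ Real.arctan (f / (-lam last)) := by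
      have h2 : ∑ i ∈ S, Real.arctan (f / lam i) = ∑ i ∈ S, (π / 2 - θ i) :=
        Finset.sum_congr rfl (fun i hi => by rw [hβ i hi])
      rw [h2, Finset.sum_sub_distrib, Finset.sum_const, nsmul_eq_mul, hcardS, hlast2]
      have h3 : ((n : ℝ) - 2) * π / 2 ≤ ∑ i ∈ S, θ i + θ last := by
        rw [← hsplitU θ]; exact hsumθ
      linarith
    have hchain : Real.arctan (∑ i ∈ S, f / lam i) ≤ Real.arctan (f / (-lam last)) :=
      le_trans (arctan_sum_le S _ (fun i hi => (div_pos hf (hSpos i hi)).le)) hsumβ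
    have h4 : ∑ i ∈ S, f / lam i ≤ f / (-lam last) :=
      Real.arctan_strictMono.le_iff_le.mp hchain
    have h5 : f * ∑ i ∈ S, (lam i)⁻¹ ≤ f * (-lam last)⁻¹ := by
      rw [Finset.mul_sum] at *
      simpa [div_eq_mul_inv] using h4
    exact le_of_mul_le_mul_left h5 hf
  -- rewrite the goal as ∑ lam i * x i ^ 2
  have hterm : ∀ i, lam i / (f ^ 2 + lam i ^ 2) ^ 2 * (f * up i - lam i * fp) ^ 2
      = lam i * x i ^ 2 := by
    intro i
    have hDne : (f ^ 2 + lam i ^ 2) ≠ 0 := (hD i).ne'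
    simp only [hxdef]
    field_simp
  rw [Finset.sum_congr rfl (fun i _ => hterm i)]
  -- core inequality
  have hxlast : x last = -∑ i ∈ S, x i := by
    have h := hsplitU x
    rw [hx'] at h
    linarith
  have hCS : (∑ i ∈ S, x i) ^ 2 ≤ (∑ i ∈ S, (lam i)⁻¹) * ∑ i ∈ S, lam i * x i ^ 2 :=
    Finset.sum_sq_le_sum_mul_sum_of_sq_eq_mul S
      (fun i hi => inv_nonneg.mpr (hSpos i hi).le)
      (fun i hi => mul_nonneg (hSpos i hi).le (sq_nonneg _))
      (fun i hi => by
        rw [← mul_assoc, inv_mul_cancel₀ (hSpos i hi).ne', one_mul])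
  set A : ℝ := ∑ i ∈ S, (lam i)⁻¹ with hA
  set B : ℝ := ∑ i ∈ S, lam i * x i ^ 2 with hB
  have hAnn : 0 ≤ A := Finset.sum_nonneg (fun i hi => inv_nonneg.mpr (hSpos i hi).le)
  have hBnn : 0 ≤ B := Finset.sum_nonneg (fun i hi => mul_nonneg (hSpos i hi).le (sq_nonneg _))
  have hAlast : -1 ≤ lam last * A := by
    have h1 : lam last * (-lam last)⁻¹ ≤ lam last * A :=
      mul_le_mul_of_nonpos_left hinv hneg.le
    have h2 : lam last * (-lam last)⁻¹ = -1 := by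
      rw [show (-lam last)⁻¹ = -(lam last)⁻¹ by rw [inv_neg],
        mul_neg, mul_inv_cancel₀ hneg.ne]
    linarith
  have hlCS : lam last * (A * B) ≤ lam last * (∑ i ∈ S, x i) ^ 2 :=
    mul_le_mul_of_nonpos_left hCS hneg.le
  calc (0 : ℝ) ≤ (1 + lam last * A) * B := mul_nonneg (by linarith) hBnn
    _ ≤ B + lam last * (∑ i ∈ S, x i) ^ 2 := by nlinarith [hlCS]
    _ = ∑ i, lam i * x i ^ 2 := by
        rw [hsplitU (fun i => lam i * x i ^ 2), hxlast]
        simp only [neg_sq]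
        rw [hB]
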